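/- (Upper bound for the Gaussian kernel on the lateral boundary, Lemma 3.1, core estimate) Under the assumptions that 0 < t − τ ≤ b_B r², C_0^{-1}(u) ≥ (1/(Λ_1 u)) I_N for 0 < u ≤ b_B, ‖E(σ)‖ ≤ 2 for |σ| ≤ b_B, |D_{1/r}x| ≥ K/σ̄, and |D_{1/r}ξ| ≤ 1 with K ≥ 8σ̄, one has ⟨C_0^{-1}(t−τ)(x − E(t−τ)ξ), (x − E(t−τ)ξ)⟩ ≥ (r²/(t−τ)) · K²/(2Λ_1σ̄²). -/

import Mathlib

open scoped RealInnerProductSpace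

/-- Upper bound for the Gaussian kernel on the lateral boundary (Lemma 3.1, core
estimate): under the dilation relation for `C_0⁻¹`, the lower quadratic-form bound
`C_0⁻¹(u) ≥ (1/(Λ1 u)) I`, the operator bound `‖E‖ ≤ 2`, `|D_{1/r}x| ≥ K/σ̄`,
`|D_{1/r}ξ| ≤ 1` and `K ≥ 8σ̄`, one has
`⟨C_0⁻¹(t−τ)(x − E(t−τ)ξ), x − E(t−τ)ξ⟩ ≥ (r²/(t−τ)) · K²/(2Λ1σ̄²)`. -/
theorem stmt16 (N : ℕ) (b_B Lam1 K σb r t τ : ℝ)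
    (Cinv Edil D : ℝ → EuclideanSpace ℝ (Fin N) → EuclideanSpace ℝ (Fin N))
    (x ξ : EuclideanSpace ℝ (Fin N))
    (hr : 0 < r) (hLam1 : 0 < Lam1) (hσb : 0 < σb) (hbB : 0 < b_B)
    (ht : 0 < t - τ) (hub : t - τ ≤ b_B * r ^ 2)
    (hsplit : ∀ w : EuclideanSpace ℝ (Fin N),
      ⟪Cinv (t - τ) w, w⟫ = ⟪Cinv ((t - τ) / r ^ 2) (D (1 / r) w), D (1 / r) w⟫)
    (hClow : ∀ u : ℝ, 0 < u → u ≤ b_B → ∀ v : EuclideanSpace ℝ (Fin N),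
      (1 / (Lam1 * u)) * ‖v‖ ^ 2 ≤ ⟪Cinv u v, v⟫)
    (hDlin : ∀ a b : EuclideanSpace ℝ (Fin N),
      D (1 / r) (a - b) = D (1 / r) a - D (1 / r) b)
    (hcomm : D (1 / r) (Edil (t - τ) ξ) = Edil ((t - τ) / r ^ 2) (D (1 / r) ξ))
    (hE2 : ∀ v : EuclideanSpace ℝ (Fin N), ‖Edil ((t - τ) / r ^ 2) v‖ ≤ 2 * ‖v‖)
    (hx : K / σb ≤ ‖D (1 / r) x‖) (hξ : ‖D (1 / r) ξ‖ ≤ 1) (hK : 8 * σb ≤ K) :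
    r ^ 2 / (t - τ) * (K ^ 2 / (2 * Lam1 * σb ^ 2)) ≤
      ⟪Cinv (t - τ) (x - Edil (t - τ) ξ), x - Edil (t - τ) ξ⟫ := by
  rw [hsplit]
  have hr2 : (0:ℝ) < r ^ 2 := by positivity
  have hu0 : 0 < (t - τ) / r ^ 2 := div_pos ht hr2
  have hub' : (t - τ) / r ^ 2 ≤ b_B := (div_le_iff₀ hr2).mpr hub
  have key := hClow _ hu0 hub' (D (1 / r) (x - Edil (t - τ) ξ))
  have hnorm : ‖D (1 / r) x‖ - 2 ≤ ‖D (1 / r) (x - Edil (t - τ) ξ)‖ := by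
    rw [hDlin, hcomm]
    have h1 := norm_sub_norm_le (D (1 / r) x) (Edil ((t - τ) / r ^ 2) (D (1 / r) ξ))
    have h2 := hE2 (D (1 / r) ξ)
    linarith
  have ha : 8 ≤ ‖D (1 / r) x‖ := by
    have : (8:ℝ) ≤ K / σb := (le_div_iff₀ hσb).mpr (by linarith)
    linarith
  have hsq : K ^ 2 / (2 * σb ^ 2) ≤ ‖D (1 / r) (x - Edil (t - τ) ξ)‖ ^ 2 := by
    have hKσ : K / σb ≤ ‖D (1 / r) x‖ := hx
    have h1 : (‖D (1 / r) x‖ - 2) ^ 2 ≤ ‖D (1 / r) (x - Edil (t - τ) ξ)‖ ^ 2 := by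
      apply sq_le_sq' <;> nlinarith [norm_nonneg (D (1 / r) (x - Edil (t - τ) ξ))]
    have hKa : K ≤ σb * ‖D (1 / r) x‖ := by
      rw [div_le_iff₀ hσb] at hKσ; linarith [hKσ]
    have hK0 : 0 < K := lt_of_lt_of_le (by positivity) hK
    have h2 : K ^ 2 / (2 * σb ^ 2) ≤ (‖D (1 / r) x‖ - 2) ^ 2 := by
      rw [div_le_iff₀ (by positivity)]
      nlinarith [sq_nonneg (‖D (1 / r) x‖ - 8), sq_nonneg (σb * (‖D (1 / r) x‖ - 8))]
    linarith
  refine le_trans ?_ key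
  have heq : r ^ 2 / (t - τ) * (K ^ 2 / (2 * Lam1 * σb ^ 2))
      = (1 / (Lam1 * ((t - τ) / r ^ 2))) * (K ^ 2 / (2 * σb ^ 2)) := by
    field_simp
  rw [heq]
  have hpos : 0 < 1 / (Lam1 * ((t - τ) / r ^ 2)) := by positivity
  exact mul_le_mul_of_nonneg_left hsq hpos.le
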